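/- Let Σ be a Coxeter diagram on n+2 nodes that is the union of two quasi-Lannér subdiagrams L₁ and L₂ whose intersection is a single node v, such that L₁∖v and L₂∖v are parabolic of ranks summing to n−1, are non-adjacent in Σ, every subdiagram of L_i other than L_i∖v (and L_i itself) is elliptic, and for all v₁ ∈ L₁∖v, v₂ ∈ L₂∖v the diagram Σ∖{v₁,v₂} is elliptic or parabolic. Then the Gram matrix G(Σ) has determinant 0 and inertia (n, 1, 1). -/

import Mathlib

open Matrix

/-- The principal submatrix of `A` on the index set `S`. -/
def subm {k : ℕ} (A : Matrix (Fin k) (Fin k) ℝ) (S : Finset (Fin k)) : Matrix ↥S ↥S ℝ :=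
  A.submatrix (fun i => (i : Fin k)) (fun i => (i : Fin k))

/-- A parabolic subdiagram on the index set `S`: the principal submatrix is positive
semidefinite and every node lies in the support of a kernel vector (each connected
component is singular). -/
def IsParabolic {k : ℕ} (G : Matrix (Fin k) (Fin k) ℝ) (S : Finset (Fin k)) : Prop :=
  (subm G S).PosSemidef ∧ ∀ i : ↥S, ∃ x : ↥S → ℝ, (subm G S).mulVec x = 0 ∧ x i ≠ 0

/-- Number of positive eigenvalues of a real symmetric matrix. -/
noncomputable def posIndex {m : Type*} [Fintype m] [DecidableEq m] {A : Matrix m m ℝ}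
    (hA : A.IsHermitian) : ℕ := (Finset.univ.filter fun i => 0 < hA.eigenvalues i).card

/-- Number of negative eigenvalues of a real symmetric matrix. -/
noncomputable def negIndex {m : Type*} [Fintype m] [DecidableEq m] {A : Matrix m m ℝ}
    (hA : A.IsHermitian) : ℕ := (Finset.univ.filter fun i => hA.eigenvalues i < 0).card

/-- Dimension of the kernel (number of zero eigenvalues) of a real symmetric matrix. -/
noncomputable def nullIndex {m : Type*} [Fintype m] [DecidableEq m] {A : Matrix m m ℝ}
    (hA : A.IsHermitian) : ℕ := (Finset.univ.filter fun i => hA.eigenvalues i = 0).card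

open Finset Module Submodule

section EigenMachinery
variable {m : Type*} [Fintype m] [DecidableEq m] {B : Matrix m m ℝ} (hB : B.IsHermitian)

/-- eigenvector as a plain function -/
noncomputable def evec (i : m) : m → ℝ := ⇑(hB.eigenvectorBasis i)

lemma evec_mulVec (i : m) : B *ᵥ evec hB i = hB.eigenvalues i • evec hB i :=
  hB.mulVec_eigenvectorBasis i

lemma evec_dot (i j : m) : evec hB i ⬝ᵥ evec hB j = if i = j then 1 else 0 := by
  have h := hB.eigenvectorBasis.orthonormal
  rw [orthonormal_iff_ite] at h
  have h2 := h i j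
  rw [EuclideanSpace.inner_eq_star_dotProduct] at h2
  simpa [dotProduct, evec, mul_comm] using h2

end EigenMachinery

section EigenMachinery2
variable {m : Type*} [Fintype m] [DecidableEq m] {B : Matrix m m ℝ} (hB : B.IsHermitian)

lemma dot_sum_smul_evec (j : m) (d : m → ℝ) :
    evec hB j ⬝ᵥ (∑ i, d i • evec hB i) = d j := by
  have : evec hB j ⬝ᵥ (∑ i, d i • evec hB i) = ∑ i, d i * (evec hB j ⬝ᵥ evec hB i) := by
    simp only [dotProduct, Finset.sum_apply, Pi.smul_apply, smul_eq_mul, Finset.mul_sum]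
    rw [Finset.sum_comm]
    refine Finset.sum_congr rfl fun i _ => Finset.sum_congr rfl fun k _ => by ring
  rw [this, Finset.sum_eq_single j]
  · simp [evec_dot hB]
  · intro i _ hij
    simp [evec_dot hB, (Ne.symm hij)]
  · simp

lemma sum_smul_evec_eq_zero {d : m → ℝ} (h : (∑ i, d i • evec hB i) = 0) : d = 0 := by
  funext j
  have := dot_sum_smul_evec hB j d
  rw [h] at this
  simpa using this.symm

lemma qform_sum_smul_evec (d : m → ℝ) :
    (∑ i, d i • evec hB i) ⬝ᵥ B *ᵥ (∑ i, d i • evec hB i)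
      = ∑ i, hB.eigenvalues i * d i ^ 2 := by
  have hmv : B *ᵥ (∑ i, d i • evec hB i) = ∑ i, (hB.eigenvalues i * d i) • evec hB i := by
    rw [show B *ᵥ (∑ i, d i • evec hB i) = B.mulVecLin (∑ i, d i • evec hB i) from rfl, map_sum]
    refine Finset.sum_congr rfl fun i _ => ?_
    rw [_root_.map_smul, Matrix.mulVecLin_apply, evec_mulVec hB, smul_smul, mul_comm]
  rw [hmv]
  have : ∀ c : m → ℝ, (∑ i, d i • evec hB i) ⬝ᵥ (∑ i, c i • evec hB i)
      = ∑ i, c i * ((∑ k, d k • evec hB k) ⬝ᵥ evec hB i) := by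
    intro c
    simp only [dotProduct, Finset.sum_apply, Pi.smul_apply, smul_eq_mul, Finset.mul_sum]
    rw [Finset.sum_comm]
    refine Finset.sum_congr rfl fun i _ => Finset.sum_congr rfl fun k _ => by ring
  rw [this]
  refine Finset.sum_congr rfl fun i _ => ?_
  have hcomm : (∑ k, d k • evec hB k) ⬝ᵥ evec hB i = evec hB i ⬝ᵥ (∑ k, d k • evec hB k) :=
    dotProduct_comm _ _
  rw [hcomm, dot_sum_smul_evec hB]
  ring

/-- span of the eigenvectors indexed by `t` -/
noncomputable def spanEvec (t : Finset m) : Submodule ℝ (m → ℝ) :=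
  Submodule.span ℝ (Set.range fun i : ↥t => evec hB ↑i)

lemma sum_evec_restrict (t : Finset m) (d : m → ℝ) (hd : ∀ i ∉ t, d i = 0) :
    ∑ i, d i • evec hB i = ∑ i : ↥t, d ↑i • evec hB ↑i := by
  rw [Finset.sum_coe_sort t (fun i => d i • evec hB i)]
  symm
  apply Finset.sum_subset (Finset.subset_univ t)
  intro x _ hx
  rw [hd x hx, zero_smul]

lemma linIndep_evec (t : Finset m) : LinearIndependent ℝ (fun i : ↥t => evec hB ↑i) := by
  rw [Fintype.linearIndependent_iff]
  intro g hg j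
  classical
  set d : m → ℝ := fun i => if h : i ∈ t then g ⟨i, h⟩ else 0 with hd
  have hde : ∀ i : ↥t, d ↑i = g i := fun i => by simp [hd, i.2]
  have hsum : (∑ i, d i • evec hB i) = 0 := by
    rw [sum_evec_restrict hB t d (fun i hi => by simp [hd, hi])]
    rw [Finset.sum_congr rfl (fun i _ => by rw [hde i])]
    exact hg
  have h0 := congrFun (sum_smul_evec_eq_zero hB hsum) ↑j
  rw [hde j] at h0
  exact h0

lemma finrank_spanEvec (t : Finset m) : finrank ℝ (spanEvec hB t) = t.card := by
  rw [spanEvec, finrank_span_eq_card (linIndep_evec hB t), Fintype.card_coe]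

lemma mem_spanEvec {t : Finset m} {x : m → ℝ} (hx : x ∈ spanEvec hB t) :
    ∃ d : m → ℝ, (∀ i ∉ t, d i = 0) ∧ x = ∑ i, d i • evec hB i := by
  rw [spanEvec, mem_span_range_iff_exists_fun] at hx
  obtain ⟨c, hc⟩ := hx
  classical
  refine ⟨fun i => if h : i ∈ t then c ⟨i, h⟩ else 0, fun i hi => by simp [hi], ?_⟩
  rw [sum_evec_restrict hB t _ (fun i hi => by simp [hi])]
  rw [← hc]
  refine Finset.sum_congr rfl fun i _ => ?_
  simp [i.2]

end EigenMachinery2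

section Counting
variable {m : Type*} [Fintype m] [DecidableEq m] {B : Matrix m m ℝ} (hB : B.IsHermitian)

lemma indexTotal : posIndex hB + negIndex hB + nullIndex hB = Fintype.card m := by
  classical
  rw [posIndex, negIndex, nullIndex]
  have h1 := Finset.card_filter_add_card_filter_not
    (s := (Finset.univ : Finset m)) (p := fun i => 0 < hB.eigenvalues i)
  have h2 := Finset.card_filter_add_card_filter_not
    (s := (Finset.univ.filter fun i => ¬ 0 < hB.eigenvalues i)) (p := fun i => hB.eigenvalues i < 0)
  rw [Finset.filter_filter, Finset.filter_filter] at h2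
  have e1 : (Finset.univ.filter fun i => ¬ 0 < hB.eigenvalues i ∧ hB.eigenvalues i < 0)
      = Finset.univ.filter fun i => hB.eigenvalues i < 0 := by
    apply Finset.filter_congr; intro i _; constructor
    · rintro ⟨_, h⟩; exact h
    · intro h; exact ⟨by linarith, h⟩
  have e2 : (Finset.univ.filter fun i => ¬ 0 < hB.eigenvalues i ∧ ¬ hB.eigenvalues i < 0)
      = Finset.univ.filter fun i => hB.eigenvalues i = 0 := by
    apply Finset.filter_congr; intro i _; constructor
    · rintro ⟨h1, h2⟩; linarith
    · intro h; constructor <;> simp [h]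
  rw [e1, e2] at h2
  rw [Finset.card_univ] at h1
  omega

lemma nullIndex_eq_finrank_ker :
    nullIndex hB = finrank ℝ (LinearMap.ker B.mulVecLin) := by
  classical
  have hrank := hB.rank_eq_card_non_zero_eigs
  have hcs : Fintype.card {i // hB.eigenvalues i ≠ 0}
      = (Finset.univ.filter fun i => hB.eigenvalues i ≠ 0).card := Fintype.card_subtype _
  have hrn : B.rank + finrank ℝ (LinearMap.ker B.mulVecLin) = Fintype.card m := by
    rw [Matrix.rank]
    rw [LinearMap.finrank_range_add_finrank_ker]
    exact Module.finrank_fintype_fun_eq_card ℝ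
  have hsplit := Finset.card_filter_add_card_filter_not
    (s := (Finset.univ : Finset m)) (p := fun i => hB.eigenvalues i ≠ 0)
  have e : (Finset.univ.filter fun i => ¬ hB.eigenvalues i ≠ 0)
      = Finset.univ.filter fun i => hB.eigenvalues i = 0 := by
    apply Finset.filter_congr; intro i _; simp
  rw [e, Finset.card_univ] at hsplit
  rw [nullIndex]
  omega

lemma one_le_negIndex (h : ¬ B.PosSemidef) : 1 ≤ negIndex hB := by
  by_contra hn
  apply h
  apply (hB.posSemidef_iff_eigenvalues_nonneg).mpr
  intro i
  by_contra hi
  push_neg at hi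
  have : i ∈ Finset.univ.filter fun i => hB.eigenvalues i < 0 := by
    simpa using hi
  have : 0 < negIndex hB := Finset.card_pos.mpr ⟨i, this⟩
  omega

lemma negIndex_add_finrank_le (W : Submodule ℝ (m → ℝ))
    (hW : ∀ x ∈ W, 0 ≤ x ⬝ᵥ B *ᵥ x) :
    negIndex hB + finrank ℝ W ≤ Fintype.card m := by
  classical
  set t : Finset m := Finset.univ.filter fun i => hB.eigenvalues i < 0 with ht
  have hdisj : spanEvec hB t ⊓ W = ⊥ := by
    rw [Submodule.eq_bot_iff]
    rintro x ⟨hx1, hx2⟩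
    obtain ⟨d, hd0, rfl⟩ := mem_spanEvec hB hx1
    have hq := qform_sum_smul_evec hB d
    have hterm : ∀ i ∈ Finset.univ, hB.eigenvalues i * d i ^ 2 ≤ 0 := by
      intro i _
      by_cases hi : i ∈ t
      · rw [ht, Finset.mem_filter] at hi
        nlinarith [sq_nonneg (d i)]
      · rw [hd0 i hi]; simp
    have hq0 : ∑ i, hB.eigenvalues i * d i ^ 2 = 0 := by
      have hle : ∑ i, hB.eigenvalues i * d i ^ 2 ≤ 0 := Finset.sum_nonpos hterm
      have hge := hW _ hx2
      rw [hq] at hge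
      linarith
    have hdz : ∀ i, d i = 0 := by
      intro i
      by_cases hi : i ∈ t
      · have := (Finset.sum_eq_zero_iff_of_nonpos hterm).mp hq0 i (Finset.mem_univ i)
        rw [ht, Finset.mem_filter] at hi
        have hlt := hi.2
        by_contra hd
        have hsq : 0 < d i ^ 2 := by positivity
        nlinarith
      · exact hd0 i hi
    have : ∀ i ∈ Finset.univ, d i • evec hB i = (0 : m → ℝ) := by
      intro i _; rw [hdz i, zero_smul]
    rw [Finset.sum_congr rfl this]
    simp
  have hsum := Submodule.finrank_sup_add_finrank_inf_eq (spanEvec hB t) W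
  rw [hdisj] at hsum
  have h1 : finrank ℝ (spanEvec hB t ⊔ W : Submodule ℝ (m → ℝ)) ≤ Fintype.card m := by
    have := Submodule.finrank_le (spanEvec hB t ⊔ W)
    rwa [Module.finrank_fintype_fun_eq_card ℝ] at this
  have h2 := finrank_spanEvec hB t
  rw [negIndex, ← ht]
  simp only [finrank_bot, add_zero] at hsum
  omega

lemma finrank_le_posIndex (W : Submodule ℝ (m → ℝ))
    (hW : ∀ x ∈ W, x ≠ 0 → 0 < x ⬝ᵥ B *ᵥ x) :
    finrank ℝ W ≤ posIndex hB := by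
  classical
  set t : Finset m := Finset.univ.filter fun i => ¬ 0 < hB.eigenvalues i with ht
  have hdisj : spanEvec hB t ⊓ W = ⊥ := by
    rw [Submodule.eq_bot_iff]
    rintro x ⟨hx1, hx2⟩
    obtain ⟨d, hd0, hx⟩ := mem_spanEvec hB hx1
    by_contra hxne
    have hpos := hW x hx2 hxne
    rw [hx] at hpos
    rw [qform_sum_smul_evec hB d] at hpos
    have hterm : ∀ i ∈ Finset.univ, hB.eigenvalues i * d i ^ 2 ≤ 0 := by
      intro i _
      by_cases hi : i ∈ t
      · rw [ht, Finset.mem_filter] at hi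
        have := hi.2
        nlinarith [sq_nonneg (d i)]
      · rw [hd0 i hi]; simp
    have := Finset.sum_nonpos hterm
    linarith
  have hsum := Submodule.finrank_sup_add_finrank_inf_eq (spanEvec hB t) W
  rw [hdisj] at hsum
  have h1 : finrank ℝ (spanEvec hB t ⊔ W : Submodule ℝ (m → ℝ)) ≤ Fintype.card m := by
    have := Submodule.finrank_le (spanEvec hB t ⊔ W)
    rwa [Module.finrank_fintype_fun_eq_card ℝ] at this
  have h2 := finrank_spanEvec hB t
  have hcompl : t.card + posIndex hB = Fintype.card m := by
    rw [posIndex, ht]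
    have := Finset.card_filter_add_card_filter_not
      (s := (Finset.univ : Finset m)) (p := fun i => 0 < hB.eigenvalues i)
    rw [Finset.card_univ] at this
    omega
  simp only [finrank_bot, add_zero] at hsum
  omega

end Counting

section Subm
variable {k : ℕ} (G : Matrix (Fin k) (Fin k) ℝ)

lemma dot_mulVec_symm {m : Type*} [Fintype m] {M : Matrix m m ℝ} (hM : M.IsHermitian)
    (a b : m → ℝ) : a ⬝ᵥ M *ᵥ b = b ⬝ᵥ M *ᵥ a := by
  have hsym : ∀ i j, M i j = M j i := by
    intro i j
    have := congrFun (congrFun hM j) i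
    rw [Matrix.conjTranspose_apply, star_trivial] at this
    exact this
  simp only [dotProduct, Matrix.mulVec, Finset.mul_sum]
  rw [Finset.sum_comm]
  exact Finset.sum_congr rfl fun i _ => Finset.sum_congr rfl fun j _ => by rw [hsym i j]; ring

lemma subm_isHermitian {S : Finset (Fin k)} (hG : G.IsHermitian) : (subm G S).IsHermitian := by
  ext i j
  have := congrFun (congrFun hG (i : Fin k)) (j : Fin k)
  rw [Matrix.conjTranspose_apply, star_trivial] at this
  simpa [subm, Matrix.conjTranspose_apply, Matrix.submatrix_apply] using this

lemma subm_apply (S : Finset (Fin k)) (i j : ↥S) : subm G S i j = G ↑i ↑j := rfl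

lemma subm_mulVec (S : Finset (Fin k)) (x : ↥S → ℝ) (i : ↥S) :
    (subm G S *ᵥ x) i = ∑ j : ↥S, G ↑i ↑j * x j := rfl

/-- extension of a vector on `S` by zero -/
def extFun {S : Finset (Fin k)} (x : ↥S → ℝ) : Fin k → ℝ :=
  fun j => if h : j ∈ S then x ⟨j, h⟩ else 0

lemma extFun_coe {S : Finset (Fin k)} (x : ↥S → ℝ) (i : ↥S) : extFun x ↑i = x i := by
  rw [extFun, dif_pos i.2]

lemma extFun_not_mem {S : Finset (Fin k)} (x : ↥S → ℝ) {j : Fin k} (hj : j ∉ S) :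
    extFun x j = 0 := by rw [extFun, dif_neg hj]

lemma sum_eq_subtype (S : Finset (Fin k)) (f : Fin k → ℝ) (hf : ∀ j ∉ S, f j = 0) :
    ∑ j, f j = ∑ j : ↥S, f ↑j := by
  rw [Finset.sum_coe_sort S f]
  exact (Finset.sum_subset (Finset.subset_univ S) (fun x _ hx => hf x hx)).symm

lemma mulVec_extFun {S : Finset (Fin k)} (x : ↥S → ℝ) (j : Fin k) :
    (G *ᵥ extFun x) j = ∑ i : ↥S, G j ↑i * x i := by
  show ∑ i, G j i * extFun x i = _
  rw [sum_eq_subtype S (fun i => G j i * extFun x i)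
    (fun i hi => by simp [extFun_not_mem x hi])]
  exact Finset.sum_congr rfl fun i _ => by rw [extFun_coe]

lemma mulVec_extFun_mem {S : Finset (Fin k)} (x : ↥S → ℝ) {j : Fin k} (hj : j ∈ S) :
    (G *ᵥ extFun x) j = (subm G S *ᵥ x) ⟨j, hj⟩ := by
  rw [mulVec_extFun, subm_mulVec]

lemma dot_extFun {S : Finset (Fin k)} (x : ↥S → ℝ) (w : Fin k → ℝ) :
    extFun x ⬝ᵥ w = ∑ i : ↥S, x i * w ↑i := by
  show ∑ i, extFun x i * w i = _
  rw [sum_eq_subtype S (fun i => extFun x i * w i)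
    (fun i hi => by simp [extFun_not_mem x hi])]
  exact Finset.sum_congr rfl fun i _ => by rw [extFun_coe]

lemma qform_extFun {S : Finset (Fin k)} (x : ↥S → ℝ) :
    extFun x ⬝ᵥ G *ᵥ extFun x = x ⬝ᵥ (subm G S *ᵥ x) := by
  rw [dot_extFun]
  exact Finset.sum_congr rfl fun i _ => by rw [mulVec_extFun_mem G x i.2, Subtype.coe_eta]

lemma extFun_restrict {S : Finset (Fin k)} (y : Fin k → ℝ) (hy : ∀ j ∉ S, y j = 0) :
    extFun (S := S) (fun j : ↥S => y ↑j) = y := by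
  funext j
  by_cases hj : j ∈ S
  · rw [extFun, dif_pos hj]
  · rw [extFun_not_mem _ hj, hy j hj]

lemma qform_restrict {S : Finset (Fin k)} (y : Fin k → ℝ) (hy : ∀ j ∉ S, y j = 0) :
    y ⬝ᵥ G *ᵥ y = (fun j : ↥S => y ↑j) ⬝ᵥ (subm G S *ᵥ fun j : ↥S => y ↑j) := by
  conv_lhs => rw [← extFun_restrict y hy]
  rw [qform_extFun]

lemma subm_mulVec_restrict {S : Finset (Fin k)} (y : Fin k → ℝ) (hy : ∀ j ∉ S, y j = 0)
    (i : ↥S) : (subm G S *ᵥ fun j : ↥S => y ↑j) i = (G *ᵥ y) ↑i := by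
  rw [subm_mulVec]
  show _ = ∑ j, G ↑i j * y j
  rw [sum_eq_subtype S (fun j => G ↑i j * y j) (fun j hj => by simp [hy j hj])]

end Subm

section Side
variable {k : ℕ} {G : Matrix (Fin k) (Fin k) ℝ}

lemma side_ker_bot (hG : G.IsHermitian) {v : Fin k} {L : Finset (Fin k)} (hv : v ∈ L)
    {i₀ : Fin k} (hi₀ : i₀ ∈ L.erase v)
    (hell : ∀ S ⊆ L, S ≠ L → S ≠ L.erase v → (subm G S).PosDef)
    (hql : ¬ (subm G L).PosSemidef) :
    ∀ u : ↥L → ℝ, subm G L *ᵥ u = 0 → u = 0 := by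
  classical
  have hi₀L : i₀ ∈ L := Finset.mem_of_mem_erase hi₀
  have hi₀v : i₀ ≠ v := (Finset.mem_erase.mp hi₀).1
  have herm : (subm G L).IsHermitian := subm_isHermitian G hG
  set i₀' : ↥L := ⟨i₀, hi₀L⟩ with hi₀'
  set W : Submodule ℝ (↥L → ℝ) := LinearMap.ker (LinearMap.proj (R := ℝ) (φ := fun _ : ↥L => ℝ) i₀') with hW
  have hWpd : ∀ x ∈ W, x ≠ 0 → 0 < x ⬝ᵥ (subm G L) *ᵥ x := by
    intro x hx hxne
    have hx0 : x i₀' = 0 := hx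
    set T : Finset (Fin k) := L.erase i₀ with hT
    have hTL : T ⊆ L := Finset.erase_subset _ _
    have hTne1 : T ≠ L := by
      intro h
      have hmem : i₀ ∈ T := by rw [h]; exact hi₀L
      rw [hT] at hmem
      exact Finset.notMem_erase i₀ L hmem
    have hTne2 : T ≠ L.erase v := by
      intro h
      have hvT : v ∈ T := Finset.mem_erase.mpr ⟨Ne.symm hi₀v, hv⟩
      rw [h] at hvT
      exact (Finset.notMem_erase v L) hvT
    have hPD := hell T hTL hTne1 hTne2
    set xE : Fin k → ℝ := extFun x with hxE
    have hxEoff : ∀ j ∉ T, xE j = 0 := by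
      intro j hj
      by_cases hjL : j ∈ L
      · have hji : j = i₀ := by
          by_contra hne
          exact hj (Finset.mem_erase.mpr ⟨hne, hjL⟩)
        subst hji
        have : xE j = x ⟨j, hjL⟩ := by rw [hxE, extFun, dif_pos hjL]
        rw [this]
        have : (⟨j, hjL⟩ : ↥L) = i₀' := Subtype.ext rfl
        rw [this, hx0]
      · exact extFun_not_mem x hjL
    have hchain : x ⬝ᵥ (subm G L) *ᵥ x
        = (fun j : ↥T => xE ↑j) ⬝ᵥ (subm G T *ᵥ fun j : ↥T => xE ↑j) := by
      rw [← qform_extFun G x, ← hxE, qform_restrict G xE hxEoff]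
    rw [hchain]
    have hxr : (fun j : ↥T => xE ↑j) ≠ 0 := by
      obtain ⟨j, hj⟩ : ∃ j : ↥L, x j ≠ 0 := by
        by_contra hc
        push_neg at hc
        exact hxne (funext hc)
      have hjne : (j : Fin k) ≠ i₀ := by
        intro h
        apply hj
        have : j = i₀' := Subtype.ext h
        rw [this, hx0]
      have hjT : (j : Fin k) ∈ T := Finset.mem_erase.mpr ⟨hjne, j.2⟩
      intro hc
      apply hj
      have := congrFun hc ⟨↑j, hjT⟩
      simpa [hxE, extFun_coe, Subtype.coe_eta] using this
    have := hPD.dotProduct_mulVec_pos hxr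
    rwa [star_trivial] at this
  have hWrank : Fintype.card ↥L ≤ finrank ℝ W + 1 := by
    have hrn := LinearMap.finrank_range_add_finrank_ker
      (LinearMap.proj (R := ℝ) (φ := fun _ : ↥L => ℝ) i₀')
    rw [Module.finrank_fintype_fun_eq_card ℝ] at hrn
    have hrle : finrank ℝ (LinearMap.range (LinearMap.proj (R := ℝ) (φ := fun _ : ↥L => ℝ) i₀'))
        ≤ 1 := by
      have := Submodule.finrank_le (LinearMap.range (LinearMap.proj (R := ℝ)
        (φ := fun _ : ↥L => ℝ) i₀'))
      rwa [Module.finrank_self] at this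
    rw [hW]
    omega
  have hpos := finrank_le_posIndex herm W hWpd
  have hneg := one_le_negIndex herm hql
  have htot := indexTotal herm
  have hnull : nullIndex herm = 0 := by omega
  rw [nullIndex_eq_finrank_ker herm] at hnull
  have hker : LinearMap.ker (subm G L).mulVecLin = ⊥ := Submodule.finrank_eq_zero.mp hnull
  intro u hu
  have : u ∈ LinearMap.ker (subm G L).mulVecLin := by
    rw [LinearMap.mem_ker, Matrix.mulVecLin_apply]
    exact hu
  rw [hker] at this
  simpa using this

lemma side_s_ne_zero (hG : G.IsHermitian) {v : Fin k} {L : Finset (Fin k)} (hv : v ∈ L)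
    {i₀ : Fin k} (hi₀ : i₀ ∈ L.erase v)
    (x : ↥(L.erase v) → ℝ) (hx : subm G (L.erase v) *ᵥ x = 0) (hx0 : x ⟨i₀, hi₀⟩ ≠ 0)
    (hell : ∀ S ⊆ L, S ≠ L → S ≠ L.erase v → (subm G S).PosDef)
    (hql : ¬ (subm G L).PosSemidef) :
    (∑ i : ↥(L.erase v), G v ↑i * x i) ≠ 0 := by
  intro hs
  have hi₀L : i₀ ∈ L := Finset.mem_of_mem_erase hi₀
  set w : Fin k → ℝ := extFun x with hw
  have hwoff : ∀ j ∉ L, w j = 0 := fun j hj =>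
    extFun_not_mem x (fun hc => hj (Finset.mem_of_mem_erase hc))
  have hGw : ∀ j ∈ L, (G *ᵥ w) j = 0 := by
    intro j hjL
    by_cases hjv : j = v
    · subst hjv
      rw [hw, mulVec_extFun]
      exact hs
    · have hjA : j ∈ L.erase v := Finset.mem_erase.mpr ⟨hjv, hjL⟩
      rw [hw, mulVec_extFun_mem G x hjA, hx]
      rfl
  set uL : ↥L → ℝ := fun i => w ↑i with huL
  have hML : subm G L *ᵥ uL = 0 := by
    funext i
    rw [huL]
    rw [subm_mulVec_restrict G w hwoff i]
    rw [hGw ↑i i.2]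
    rfl
  have := side_ker_bot hG hv hi₀ hell hql uL hML
  have h0 := congrFun this ⟨i₀, hi₀L⟩
  rw [huL] at h0
  simp only at h0
  apply hx0
  have hwx : w i₀ = x ⟨i₀, hi₀⟩ := by rw [hw, extFun, dif_pos hi₀]
  rw [← hwx]
  simpa using h0

end Side

/-- From the proof of Lemma 3 (Section 4): let `Σ` be a Coxeter diagram on `n + 2` nodes
which is the union of two quasi-Lannér diagrams `L₁`, `L₂` meeting in a single node `v`,
with `L₁ \ v` and `L₂ \ v` parabolic, non-adjacent, of ranks summing to `n - 1`, every
subdiagram of `Lᵢ` other than `Lᵢ` and `Lᵢ \ v` elliptic, and `Σ \ {v₁, v₂}` elliptic or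
parabolic (positive semidefinite) for all `v₁ ∈ L₁ \ v`, `v₂ ∈ L₂ \ v`. Then the Gram
matrix has determinant `0` and inertia `(n, 1, 1)`. -/
theorem pyramid_diagram_inertia {n : ℕ}
    (G : Matrix (Fin (n + 2)) (Fin (n + 2)) ℝ) (hG : G.IsHermitian)
    (hdiag : ∀ i, G i i = 1)
    (hcox : ∀ i j, i ≠ j → G i j ≤ -1 ∨ ∃ m : ℕ, 2 ≤ m ∧ G i j = -Real.cos (Real.pi / m))
    (v : Fin (n + 2)) (L₁ L₂ : Finset (Fin (n + 2)))
    (hv₁ : v ∈ L₁) (hv₂ : v ∈ L₂)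
    (hunion : L₁ ∪ L₂ = Finset.univ) (hinter : L₁ ∩ L₂ = {v})
    (hnonadj : ∀ i ∈ L₁.erase v, ∀ j ∈ L₂.erase v, G i j = 0)
    (hpar₁ : IsParabolic G (L₁.erase v)) (hpar₂ : IsParabolic G (L₂.erase v))
    (hranks : (subm G (L₁.erase v)).rank + (subm G (L₂.erase v)).rank = n - 1)
    (hell₁ : ∀ S ⊆ L₁, S ≠ L₁ → S ≠ L₁.erase v → (subm G S).PosDef)
    (hell₂ : ∀ S ⊆ L₂, S ≠ L₂ → S ≠ L₂.erase v → (subm G S).PosDef)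
    (hql₁ : ¬ (subm G L₁).PosSemidef) (hql₂ : ¬ (subm G L₂).PosSemidef)
    (hvert : ∀ v₁ ∈ L₁.erase v, ∀ v₂ ∈ L₂.erase v,
      (subm G ((Finset.univ.erase v₁).erase v₂)).PosSemidef) :
    G.det = 0 ∧ posIndex hG = n ∧ negIndex hG = 1 ∧ nullIndex hG = 1 := by
  classical
  set A₁ := L₁.erase v with hA₁def
  set A₂ := L₂.erase v with hA₂def
  have hvA₁ : v ∉ A₁ := Finset.notMem_erase _ _
  have hvA₂ : v ∉ A₂ := Finset.notMem_erase _ _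
  have hsymm : ∀ i j, G i j = G j i := by
    intro i j
    have := congrFun (congrFun hG j) i
    rw [Matrix.conjTranspose_apply, star_trivial] at this
    exact this
  have hdisj : ∀ j, j ∈ A₁ → j ∈ A₂ → False := by
    intro j h1 h2
    have hj1 : j ∈ L₁ := Finset.mem_of_mem_erase h1
    have hj2 : j ∈ L₂ := Finset.mem_of_mem_erase h2
    have hj : j ∈ L₁ ∩ L₂ := Finset.mem_inter.mpr ⟨hj1, hj2⟩
    rw [hinter, Finset.mem_singleton] at hj
    exact (Finset.mem_erase.mp h1).1 hj
  have hcover : ∀ j : Fin (n + 2), j = v ∨ j ∈ A₁ ∨ j ∈ A₂ := by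
    intro j
    by_cases hjv : j = v
    · exact Or.inl hjv
    · have hj : j ∈ L₁ ∪ L₂ := by rw [hunion]; exact Finset.mem_univ j
      rcases Finset.mem_union.mp hj with h | h
      · exact Or.inr (Or.inl (Finset.mem_erase.mpr ⟨hjv, h⟩))
      · exact Or.inr (Or.inr (Finset.mem_erase.mpr ⟨hjv, h⟩))
  -- the one-point diagram is positive semidefinite
  have hsingle : (subm G ({v} : Finset (Fin (n + 2)))).PosSemidef := by
    refine .of_dotProduct_mulVec_nonneg (subm_isHermitian G hG) ?_
    intro x
    letI : Unique ↥({v} : Finset (Fin (n + 2))) :=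
      ⟨⟨⟨v, Finset.mem_singleton_self v⟩⟩, fun i => Subtype.ext (Finset.mem_singleton.mp i.2)⟩
    rw [star_trivial]
    have hq : x ⬝ᵥ (subm G ({v} : Finset (Fin (n + 2))) *ᵥ x)
        = x default * (G v v * x default) := by
      rw [dotProduct, Fintype.sum_unique]
      congr 1
      rw [subm_mulVec, Fintype.sum_unique]
      rfl
    rw [hq, hdiag v, one_mul]
    exact mul_self_nonneg _
  have hA₁ne : A₁.Nonempty := by
    rw [Finset.nonempty_iff_ne_empty]
    intro hA
    apply hql₁
    have hL : L₁ = {v} := by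
      apply Finset.Subset.antisymm
      · intro i hi
        by_cases hiv : i = v
        · simp [hiv]
        · exfalso
          have : i ∈ A₁ := Finset.mem_erase.mpr ⟨hiv, hi⟩
          rw [hA] at this
          simp at this
      · intro i hi
        rw [Finset.mem_singleton.mp hi]
        exact hv₁
    rw [hL]
    exact hsingle
  have hA₂ne : A₂.Nonempty := by
    rw [Finset.nonempty_iff_ne_empty]
    intro hA
    apply hql₂
    have hL : L₂ = {v} := by
      apply Finset.Subset.antisymm
      · intro i hi
        by_cases hiv : i = v
        · simp [hiv]
        · exfalso
          have : i ∈ A₂ := Finset.mem_erase.mpr ⟨hiv, hi⟩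
          rw [hA] at this
          simp at this
      · intro i hi
        rw [Finset.mem_singleton.mp hi]
        exact hv₂
    rw [hL]
    exact hsingle
  obtain ⟨i₁, hi₁A⟩ := hA₁ne
  obtain ⟨i₂, hi₂A⟩ := hA₂ne
  have hi₁L : i₁ ∈ L₁ := Finset.mem_of_mem_erase hi₁A
  have hi₂L : i₂ ∈ L₂ := Finset.mem_of_mem_erase hi₂A
  obtain ⟨x₁, hx₁ker, hx₁0⟩ := hpar₁.2 ⟨i₁, hi₁A⟩
  obtain ⟨x₂, hx₂ker, hx₂0⟩ := hpar₂.2 ⟨i₂, hi₂A⟩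
  have hx₁ne : x₁ ≠ 0 := fun h => hx₁0 (by rw [h]; rfl)
  have hx₂ne : x₂ ≠ 0 := fun h => hx₂0 (by rw [h]; rfl)
  set s₁ : ℝ := ∑ i : ↥A₁, G v ↑i * x₁ i with hs₁def
  set s₂ : ℝ := ∑ i : ↥A₂, G v ↑i * x₂ i with hs₂def
  have hs₁ : s₁ ≠ 0 := side_s_ne_zero hG hv₁ hi₁A x₁ hx₁ker hx₁0 hell₁ hql₁
  have hs₂ : s₂ ≠ 0 := side_s_ne_zero hG hv₂ hi₂A x₂ hx₂ker hx₂0 hell₂ hql₂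
  -- the images of the extended kernel vectors
  have hw₁ : G *ᵥ extFun x₁ = fun j => if j = v then s₁ else 0 := by
    funext j
    rcases hcover j with hjv | hjA | hjB
    · subst hjv
      rw [mulVec_extFun, if_pos rfl, hs₁def]
    · rw [mulVec_extFun_mem G x₁ hjA, hx₁ker, if_neg (Finset.mem_erase.mp hjA).1]
      rfl
    · rw [mulVec_extFun, if_neg (Finset.mem_erase.mp hjB).1]
      apply Finset.sum_eq_zero
      intro i _
      rw [hsymm j ↑i, hnonadj ↑i i.2 j hjB, zero_mul]
  have hw₂ : G *ᵥ extFun x₂ = fun j => if j = v then s₂ else 0 := by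
    funext j
    rcases hcover j with hjv | hjA | hjB
    · subst hjv
      rw [mulVec_extFun, if_pos rfl, hs₂def]
    · rw [mulVec_extFun, if_neg (Finset.mem_erase.mp hjA).1]
      apply Finset.sum_eq_zero
      intro i _
      rw [hnonadj j hjA ↑i i.2, zero_mul]
    · rw [mulVec_extFun_mem G x₂ hjB, hx₂ker, if_neg (Finset.mem_erase.mp hjB).1]
      rfl
  -- the global kernel vector y
  set y : Fin (n + 2) → ℝ := s₂ • extFun x₁ - s₁ • extFun x₂ with hydef
  have hGy : G *ᵥ y = 0 := by
    rw [hydef, Matrix.mulVec_sub, Matrix.mulVec_smul, Matrix.mulVec_smul, hw₁, hw₂]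
    funext j
    by_cases hjv : j = v <;> simp [hjv, mul_comm]
  have hyi₁ : y i₁ = s₂ * x₁ ⟨i₁, hi₁A⟩ := by
    rw [hydef]
    simp only [Pi.sub_apply, Pi.smul_apply, smul_eq_mul]
    have h1 : extFun x₁ i₁ = x₁ ⟨i₁, hi₁A⟩ := by rw [extFun, dif_pos hi₁A]
    have h2 : extFun x₂ i₁ = 0 := extFun_not_mem x₂ (fun h => hdisj i₁ hi₁A h)
    rw [h1, h2, mul_zero, sub_zero]
  have hyne : y i₁ ≠ 0 := by
    rw [hyi₁]
    exact mul_ne_zero hs₂ hx₁0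
  have hyker : y ∈ LinearMap.ker G.mulVecLin := by
    rw [LinearMap.mem_ker, Matrix.mulVecLin_apply, hGy]
  -- determinant
  have hdet : G.det = 0 := by
    rw [← Matrix.exists_mulVec_eq_zero_iff]
    exact ⟨y, fun h => hyne (by rw [h]; rfl), hGy⟩
  -- rank / kernel-dimension arithmetic
  have hcard12 : A₁.card + A₂.card = n + 1 := by
    have hL1 : A₁.card = L₁.card - 1 := Finset.card_erase_of_mem hv₁
    have hL2 : A₂.card = L₂.card - 1 := Finset.card_erase_of_mem hv₂
    have hI := Finset.card_union_add_card_inter L₁ L₂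
    rw [hunion, hinter, Finset.card_univ, Fintype.card_fin, Finset.card_singleton] at hI
    have h1 : 1 ≤ L₁.card := Finset.card_pos.mpr ⟨v, hv₁⟩
    have h2 : 1 ≤ L₂.card := Finset.card_pos.mpr ⟨v, hv₂⟩
    omega
  have hrn₁ : (subm G A₁).rank + finrank ℝ (LinearMap.ker (subm G A₁).mulVecLin) = A₁.card := by
    rw [Matrix.rank, LinearMap.finrank_range_add_finrank_ker,
      Module.finrank_fintype_fun_eq_card, Fintype.card_coe]
  have hrn₂ : (subm G A₂).rank + finrank ℝ (LinearMap.ker (subm G A₂).mulVecLin) = A₂.card := by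
    rw [Matrix.rank, LinearMap.finrank_range_add_finrank_ker,
      Module.finrank_fintype_fun_eq_card, Fintype.card_coe]
  have hx₁mem : x₁ ∈ LinearMap.ker (subm G A₁).mulVecLin := by
    rw [LinearMap.mem_ker, Matrix.mulVecLin_apply, hx₁ker]
  have hx₂mem : x₂ ∈ LinearMap.ker (subm G A₂).mulVecLin := by
    rw [LinearMap.mem_ker, Matrix.mulVecLin_apply, hx₂ker]
  have hk₁pos : 1 ≤ finrank ℝ (LinearMap.ker (subm G A₁).mulVecLin) := by
    rw [Nat.one_le_iff_ne_zero]
    intro h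
    have hbot := Submodule.finrank_eq_zero.mp h
    rw [hbot, Submodule.mem_bot] at hx₁mem
    exact hx₁ne hx₁mem
  have hk₂pos : 1 ≤ finrank ℝ (LinearMap.ker (subm G A₂).mulVecLin) := by
    rw [Nat.one_le_iff_ne_zero]
    intro h
    have hbot := Submodule.finrank_eq_zero.mp h
    rw [hbot, Submodule.mem_bot] at hx₂mem
    exact hx₂ne hx₂mem
  have hk₁ : finrank ℝ (LinearMap.ker (subm G A₁).mulVecLin) = 1 := by
    have hA₁c : 1 ≤ A₁.card := Finset.card_pos.mpr ⟨i₁, hi₁A⟩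
    have hA₂c : 1 ≤ A₂.card := Finset.card_pos.mpr ⟨i₂, hi₂A⟩
    omega
  have hk₂ : finrank ℝ (LinearMap.ker (subm G A₂).mulVecLin) = 1 := by
    have hA₁c : 1 ≤ A₁.card := Finset.card_pos.mpr ⟨i₁, hi₁A⟩
    have hA₂c : 1 ≤ A₂.card := Finset.card_pos.mpr ⟨i₂, hi₂A⟩
    omega
  have hspan₁ : LinearMap.ker (subm G A₁).mulVecLin = Submodule.span ℝ {x₁} := by
    symm
    apply Submodule.eq_of_le_of_finrank_le
    · rw [Submodule.span_le, Set.singleton_subset_iff]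
      exact hx₁mem
    · rw [hk₁, finrank_span_singleton hx₁ne]
  have hspan₂ : LinearMap.ker (subm G A₂).mulVecLin = Submodule.span ℝ {x₂} := by
    symm
    apply Submodule.eq_of_le_of_finrank_le
    · rw [Submodule.span_le, Set.singleton_subset_iff]
      exact hx₂mem
    · rw [hk₂, finrank_span_singleton hx₂ne]
  -- partitioned sums
  have hd12 : Disjoint A₁ A₂ := Finset.disjoint_left.mpr (fun a h1 h2 => (hdisj a h1 h2).elim)
  have hdv : Disjoint (A₁ ∪ A₂) ({v} : Finset (Fin (n + 2))) := by
    rw [Finset.disjoint_singleton_right, Finset.mem_union]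
    rintro (h | h)
    · exact hvA₁ h
    · exact hvA₂ h
  have huniv : (Finset.univ : Finset (Fin (n + 2))) = (A₁ ∪ A₂) ∪ {v} := by
    ext j
    simp only [Finset.mem_univ, true_iff, Finset.mem_union, Finset.mem_singleton]
    rcases hcover j with h | h | h
    · exact Or.inr h
    · exact Or.inl (Or.inl h)
    · exact Or.inl (Or.inr h)
  have hsum3 : ∀ f : Fin (n + 2) → ℝ,
      ∑ j, f j = (∑ j : ↥A₁, f ↑j) + (∑ j : ↥A₂, f ↑j) + f v := by
    intro f
    calc ∑ j, f j = ∑ j ∈ (A₁ ∪ A₂) ∪ {v}, f j := by rw [← huniv]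
    _ = _ := by
      rw [Finset.sum_union hdv, Finset.sum_union hd12, Finset.sum_singleton,
        Finset.sum_coe_sort, Finset.sum_coe_sort]
  -- negative index is 1
  have hnegge : 1 ≤ negIndex hG := by
    apply one_le_negIndex hG
    intro hPSD
    apply hql₁
    refine .of_dotProduct_mulVec_nonneg (subm_isHermitian G hG) ?_
    intro x
    have := hPSD.dotProduct_mulVec_nonneg (extFun x)
    rw [star_trivial, qform_extFun G x] at this
    rwa [star_trivial]
  have hnegle : negIndex hG ≤ 1 := by
    set φ : (Fin (n + 2) → ℝ) →ₗ[ℝ] ℝ × ℝ :=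
      LinearMap.prod (LinearMap.proj i₁) (LinearMap.proj i₂) with hφdef
    set U := LinearMap.ker φ with hUdef
    have hUrank : n ≤ finrank ℝ U := by
      have hrn := LinearMap.finrank_range_add_finrank_ker φ
      rw [Module.finrank_fintype_fun_eq_card, Fintype.card_fin] at hrn
      have hr2 : finrank ℝ (LinearMap.range φ) ≤ 2 := by
        have h1 := Submodule.finrank_le (LinearMap.range φ)
        rw [Module.finrank_prod, Module.finrank_self] at h1
        exact h1
      rw [hUdef]
      omega
    set Wb := U ⊔ Submodule.span ℝ {y} with hWbdef
    have hyW : y ∈ Wb := by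
      apply Submodule.mem_sup_right
      exact Submodule.mem_span_singleton_self y
    have hyU : y ∉ U := by
      intro h
      rw [hUdef, LinearMap.mem_ker, hφdef] at h
      have : y i₁ = 0 := congrArg Prod.fst h
      exact hyne this
    have hUW : U < Wb := by
      refine lt_of_le_of_ne le_sup_left ?_
      intro h
      rw [h] at hyU
      exact hyU hyW
    have hWrank : n + 1 ≤ finrank ℝ Wb := by
      have := Submodule.finrank_lt_finrank_of_lt hUW
      omega
    have hq : ∀ x ∈ Wb, 0 ≤ x ⬝ᵥ G *ᵥ x := by
      intro x hx
      rcases Submodule.mem_sup.mp hx with ⟨u, hu, z, hz, rfl⟩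
      obtain ⟨c, rfl⟩ := Submodule.mem_span_singleton.mp hz
      have hu12 : u i₁ = 0 ∧ u i₂ = 0 := by
        rw [hUdef, LinearMap.mem_ker, hφdef] at hu
        exact ⟨congrArg Prod.fst hu, congrArg Prod.snd hu⟩
      have hexp : (u + c • y) ⬝ᵥ G *ᵥ (u + c • y) = u ⬝ᵥ G *ᵥ u := by
        have hGcy : G *ᵥ (c • y) = 0 := by rw [Matrix.mulVec_smul, hGy, smul_zero]
        rw [Matrix.mulVec_add, hGcy, add_zero, add_dotProduct]
        have hsw : (c • y) ⬝ᵥ G *ᵥ u = u ⬝ᵥ G *ᵥ (c • y) := dot_mulVec_symm hG _ _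
        rw [hsw, hGcy, dotProduct_zero, add_zero]
      rw [hexp]
      set S := (Finset.univ.erase i₁).erase i₂ with hSdef
      have huoff : ∀ j ∉ S, u j = 0 := by
        intro j hj
        by_cases hj2 : j = i₂
        · rw [hj2]; exact hu12.2
        · by_cases hj1 : j = i₁
          · rw [hj1]; exact hu12.1
          · exact absurd (Finset.mem_erase.mpr ⟨hj2,
              Finset.mem_erase.mpr ⟨hj1, Finset.mem_univ j⟩⟩) hj
      rw [qform_restrict G u huoff]
      have := (hvert i₁ hi₁A i₂ hi₂A).dotProduct_mulVec_nonneg (fun j : ↥S => u ↑j)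
      rwa [star_trivial] at this
    have := negIndex_add_finrank_le hG Wb hq
    rw [Fintype.card_fin] at this
    omega
  have hneg1 : negIndex hG = 1 := le_antisymm hnegle hnegge
  -- kernel of G is one-dimensional
  have hinj : ∀ z : Fin (n + 2) → ℝ, G *ᵥ z = 0 → z i₁ = 0 → z = 0 := by
    intro z hGz hzi₁
    -- the coordinate at v vanishes
    have hzv : z v = 0 := by
      have hwoffL : ∀ j ∉ L₁, extFun x₁ j = 0 := fun j hj =>
        extFun_not_mem x₁ (fun hc => hj (Finset.mem_of_mem_erase hc))
      set uL : ↥L₁ → ℝ := fun i => extFun x₁ ↑i with huLdef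
      have hMu : subm G L₁ *ᵥ uL
          = fun i : ↥L₁ => if (↑i : Fin (n + 2)) = v then s₁ else 0 := by
        funext i
        rw [huLdef, subm_mulVec_restrict G (extFun x₁) hwoffL i, hw₁]
      set r : ↥L₁ → ℝ := fun i => z ↑i with hrdef
      have hMr : ∀ i : ↥L₁, (↑i : Fin (n + 2)) ≠ v → (subm G L₁ *ᵥ r) i = 0 := by
        intro i hiv
        have hiA : (↑i : Fin (n + 2)) ∈ A₁ := Finset.mem_erase.mpr ⟨hiv, i.2⟩
        rw [hrdef, subm_mulVec]
        have hvan : ∀ j ∉ L₁, G ↑i j * z j = 0 := by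
          intro j hj
          rcases hcover j with hjv | hjA | hjB
          · exact absurd (hjv ▸ hv₁) hj
          · exact absurd (Finset.mem_of_mem_erase hjA) hj
          · rw [hnonadj ↑i hiA j hjB, zero_mul]
        rw [← sum_eq_subtype L₁ (fun j => G ↑i j * z j) hvan]
        exact congrFun hGz ↑i
      have hdot := dot_mulVec_symm (subm_isHermitian G hG) uL r
      have hL : uL ⬝ᵥ (subm G L₁ *ᵥ r) = 0 := by
        show ∑ i : ↥L₁, uL i * (subm G L₁ *ᵥ r) i = 0
        apply Finset.sum_eq_zero
        intro i _
        by_cases hiv : (↑i : Fin (n + 2)) = v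
        · have h0 : uL i = 0 := by
            rw [huLdef]
            exact extFun_not_mem x₁ (by rw [hiv]; exact hvA₁)
          rw [h0, zero_mul]
        · rw [hMr i hiv, mul_zero]
      have hR : r ⬝ᵥ (subm G L₁ *ᵥ uL) = z v * s₁ := by
        rw [hMu]
        show ∑ i : ↥L₁, r i * (if (↑i : Fin (n + 2)) = v then s₁ else 0) = z v * s₁
        rw [Finset.sum_eq_single (⟨v, hv₁⟩ : ↥L₁)]
        · rw [if_pos rfl, hrdef]
        · intro b _ hb
          rw [if_neg, mul_zero]
          intro hc
          exact hb (Subtype.ext hc)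
        · intro h
          exact absurd (Finset.mem_univ _) h
      have hzs : z v * s₁ = 0 := by rw [← hR, ← hdot, hL]
      rcases mul_eq_zero.mp hzs with h | h
      · exact h
      · exact absurd h hs₁
    -- the coordinates in A₁ vanish
    have hzA₁ : ∀ j ∈ A₁, z j = 0 := by
      have hkz : subm G A₁ *ᵥ (fun j : ↥A₁ => z ↑j) = 0 := by
        funext i
        rw [subm_mulVec]
        have hvan : ∀ j ∉ A₁, G ↑i j * z j = 0 := by
          intro j hj
          rcases hcover j with hjv | hjA | hjB
          · rw [hjv, hzv, mul_zero]
          · exact absurd hjA hj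
          · rw [hnonadj ↑i i.2 j hjB, zero_mul]
        rw [← sum_eq_subtype A₁ (fun j => G ↑i j * z j) hvan]
        have h := congrFun hGz ↑i
        exact h
      have hmem : (fun j : ↥A₁ => z ↑j) ∈ Submodule.span ℝ {x₁} := by
        rw [← hspan₁, LinearMap.mem_ker, Matrix.mulVecLin_apply, hkz]
      obtain ⟨α, hα⟩ := Submodule.mem_span_singleton.mp hmem
      have hα0 : α = 0 := by
        have h := congrFun hα ⟨i₁, hi₁A⟩
        simp only [Pi.smul_apply, smul_eq_mul] at h
        rw [hzi₁] at h
        rcases mul_eq_zero.mp h with h' | h'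
        · exact h'
        · exact absurd h' hx₁0
      intro j hj
      have h := congrFun hα ⟨j, hj⟩
      rw [hα0] at h
      simpa using h.symm
    -- the coordinates in A₂ vanish
    have hzA₂ : ∀ j ∈ A₂, z j = 0 := by
      have hkz : subm G A₂ *ᵥ (fun j : ↥A₂ => z ↑j) = 0 := by
        funext i
        rw [subm_mulVec]
        have hvan : ∀ j ∉ A₂, G ↑i j * z j = 0 := by
          intro j hj
          rcases hcover j with hjv | hjA | hjB
          · rw [hjv, hzv, mul_zero]
          · rw [hzA₁ j hjA, mul_zero]
          · exact absurd hjB hj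
        rw [← sum_eq_subtype A₂ (fun j => G ↑i j * z j) hvan]
        exact congrFun hGz ↑i
      have hmem : (fun j : ↥A₂ => z ↑j) ∈ Submodule.span ℝ {x₂} := by
        rw [← hspan₂, LinearMap.mem_ker, Matrix.mulVecLin_apply, hkz]
      obtain ⟨β, hβ⟩ := Submodule.mem_span_singleton.mp hmem
      have hv0 : (∑ j : ↥A₁, G v ↑j * z ↑j) + (∑ j : ↥A₂, G v ↑j * z ↑j) + G v v * z v = 0 := by
        have h := congrFun hGz v
        rw [show (G *ᵥ z) v = ∑ j, G v j * z j from rfl,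
          hsum3 (fun j => G v j * z j)] at h
        exact h
      have h1 : (∑ j : ↥A₁, G v ↑j * z ↑j) = 0 :=
        Finset.sum_eq_zero fun j _ => by rw [hzA₁ ↑j j.2, mul_zero]
      have h2 : (∑ j : ↥A₂, G v ↑j * z ↑j) = β * s₂ := by
        rw [hs₂def, Finset.mul_sum]
        refine Finset.sum_congr rfl fun j _ => ?_
        have hz : z ↑j = β * x₂ j := by
          have := congrFun hβ j
          simpa using this.symm
        rw [hz]
        ring
      rw [h1, h2, hzv, mul_zero, add_zero, zero_add] at hv0
      have hβ0 : β = 0 := by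
        rcases mul_eq_zero.mp hv0 with h | h
        · exact h
        · exact absurd h hs₂
      intro j hj
      have h := congrFun hβ ⟨j, hj⟩
      rw [hβ0] at h
      simpa using h.symm
    funext j
    rcases hcover j with h | h | h
    · rw [h, hzv]; rfl
    · rw [hzA₁ j h]; rfl
    · rw [hzA₂ j h]; rfl
  have hkerle : finrank ℝ (LinearMap.ker G.mulVecLin) ≤ 1 := by
    set ψ : (LinearMap.ker G.mulVecLin) →ₗ[ℝ] ℝ :=
      (LinearMap.proj i₁).comp (Submodule.subtype _) with hψdef
    have hψinj : Function.Injective ψ := by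
      rw [← LinearMap.ker_eq_bot, Submodule.eq_bot_iff]
      rintro ⟨z, hz⟩ hzker
      have hGz : G *ᵥ z = 0 := by
        rw [← Matrix.mulVecLin_apply]
        exact hz
      have hzi : z i₁ = 0 := hzker
      exact Subtype.ext (hinj z hGz hzi)
    have := LinearMap.finrank_le_finrank_of_injective hψinj
    rwa [Module.finrank_self] at this
  have hkerge : 1 ≤ finrank ℝ (LinearMap.ker G.mulVecLin) := by
    rw [Nat.one_le_iff_ne_zero]
    intro h
    have hbot := Submodule.finrank_eq_zero.mp h
    rw [hbot, Submodule.mem_bot] at hyker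
    exact hyne (by rw [hyker]; rfl)
  have hnull1 : nullIndex hG = 1 := by
    rw [nullIndex_eq_finrank_ker hG]
    omega
  have htot := indexTotal hG
  rw [Fintype.card_fin] at htot
  exact ⟨hdet, by omega, hneg1, hnull1⟩
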